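/- Let n ≥ 1 be an integer and a, b ∈ ℂ satisfy 2^{2^n} − |a| > 2 and (2^{2^n} − |a|)² − |b| > 2. Define Q(z) = (z^{2^n} + a)² + b. Then Q^{-1}(D̄(0,2)) ⊆ D̄(0,2), where D̄(0,2) is the closed disc of radius 2 centered at 0. -/

import Mathlib

/-- If `n ≥ 1` and `a, b ∈ ℂ` satisfy `2^{2^n} − |a| > 2` and `(2^{2^n} − |a|)² − |b| > 2`,
then the preimage of the closed disc `D̄(0,2)` under `Q(z) = (z^{2^n} + a)² + b` is
contained in `D̄(0,2)`. -/
theorem preimage_closedBall_subset_closedBall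
    (n : ℕ) (hn : 1 ≤ n) (a b : ℂ)
    (h1 : 2 < (2 : ℝ) ^ 2 ^ n - ‖a‖)
    (h2 : 2 < ((2 : ℝ) ^ 2 ^ n - ‖a‖) ^ 2 - ‖b‖) :
    (fun z : ℂ => (z ^ 2 ^ n + a) ^ 2 + b) ⁻¹' Metric.closedBall 0 2 ⊆
      Metric.closedBall 0 2 := by
  intro z hz
  simp only [Set.mem_preimage, Metric.mem_closedBall, dist_zero_right] at hz ⊢
  by_contra h
  push_neg at h
  -- h : 2 < Complex.abs z
  have hpow : (2 : ℝ) ^ 2 ^ n ≤ ‖z‖ ^ 2 ^ n :=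
    pow_le_pow_left₀ (by norm_num) h.le _
  have key1 : (2 : ℝ) ^ 2 ^ n - ‖a‖ ≤ ‖z ^ 2 ^ n + a‖ := by
    have : ‖z ^ 2 ^ n‖ - ‖-a‖ ≤ ‖z ^ 2 ^ n - -a‖ :=
      norm_sub_norm_le _ _
    simp only [norm_pow, norm_neg, sub_neg_eq_add] at this
    linarith
  have hpos : (0 : ℝ) ≤ (2 : ℝ) ^ 2 ^ n - ‖a‖ := by linarith
  have key2 : ((2 : ℝ) ^ 2 ^ n - ‖a‖) ^ 2 ≤ ‖z ^ 2 ^ n + a‖ ^ 2 :=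
    pow_le_pow_left₀ hpos key1 2
  have key3 : ((2 : ℝ) ^ 2 ^ n - ‖a‖) ^ 2 - ‖b‖ ≤
      ‖(z ^ 2 ^ n + a) ^ 2 + b‖ := by
    have : ‖(z ^ 2 ^ n + a) ^ 2‖ - ‖-b‖ ≤
        ‖(z ^ 2 ^ n + a) ^ 2 - -b‖ :=
      norm_sub_norm_le _ _
    simp only [norm_pow, norm_neg, sub_neg_eq_add] at this
    linarith
  linarith
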